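/- A real polynomial p of degree k whose roots are all real and simple satisfies: for each i = 1,…,k−1 the polynomial G_i(x) = (k−i)(p^{(i)}(x))² − (k−i+1)p^{(i−1)}(x)p^{(i+1)}(x) is strictly positive for all real x. -/

import Mathlib

open Polynomial Finset


lemma deriv_prod_lin (s : Finset ℝ) :
    derivative (∏ r ∈ s, (X - C r) : ℝ[X]) = ∑ r ∈ s, ∏ t ∈ s.erase r, (X - C t) := by
  classical
  induction s using Finset.induction_on with
  | empty => simp
  | @insert a s ha ih =>
    have h2 : ∀ r ∈ s, ∏ t ∈ (insert a s).erase r, (X - C t)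
        = (X - C a) * ∏ t ∈ s.erase r, (X - C t) := fun r hr => by
      rw [Finset.erase_insert_of_ne (by rintro rfl; exact ha hr),
        Finset.prod_insert (fun h => ha (Finset.erase_subset _ _ h))]
    rw [Finset.prod_insert ha, derivative_mul, ih, Finset.sum_insert ha,
      Finset.erase_insert ha, Finset.sum_congr rfl h2, ← Finset.mul_sum]
    simp only [derivative_sub, derivative_X, derivative_C, sub_zero, one_mul]

lemma key_prod (s : Finset ℝ) (c : ℝ) (hc : c ≠ 0) (hs : 2 ≤ s.card)
    (q : ℝ[X]) (hq : q = C c * ∏ r ∈ s, (X - C r)) (x : ℝ) :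
    0 < ((s.card : ℝ) - 1) * (eval x (derivative q))^2
      - (s.card : ℝ) * eval x q * eval x (derivative (derivative q)) := by
  classical
  have hq1 : derivative q = C c * ∑ r ∈ s, ∏ t ∈ s.erase r, (X - C t) := by
    rw [hq, derivative_C_mul, deriv_prod_lin]
  have hq2 : derivative (derivative q)
      = C c * ∑ r ∈ s, ∑ t ∈ s.erase r, ∏ u ∈ (s.erase r).erase t, (X - C u) := by
    rw [hq1, derivative_C_mul, derivative_sum]
    congr 1
    exact Finset.sum_congr rfl fun r _ => deriv_prod_lin _
  by_cases hx : x ∈ s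
  · -- root case
    have h0 : eval x q = 0 := by
      rw [hq]
      simp only [eval_mul, eval_C, eval_prod, eval_sub, eval_X]
      rw [Finset.prod_eq_zero hx (by ring)]
      ring
    have h1 : eval x (derivative q) = c * ∏ t ∈ s.erase x, (x - t) := by
      rw [hq1]
      simp only [eval_mul, eval_C, eval_finset_sum, eval_prod, eval_sub, eval_X]
      congr 1
      rw [Finset.sum_eq_single x (fun r hr hne => Finset.prod_eq_zero
        (Finset.mem_erase.mpr ⟨hne.symm, hx⟩) (by ring)) (fun h => absurd hx h)]
    have hne : eval x (derivative q) ≠ 0 := by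
      rw [h1]
      exact mul_ne_zero hc (Finset.prod_ne_zero_iff.mpr fun t ht =>
        sub_ne_zero.mpr (fun h => (Finset.mem_erase.mp ht).1 h.symm))
    have hcard : (1 : ℝ) < s.card := by exact_mod_cast hs.trans_lt' one_lt_two
    rw [h0]
    have : (0:ℝ) < ((s.card : ℝ) - 1) * (eval x (derivative q))^2 := by
      apply mul_pos (by linarith) (by positivity)
    linarith
  · -- non-root case
    have hxr : ∀ r ∈ s, x - r ≠ 0 := fun r hr => sub_ne_zero.mpr (fun h => hx (h ▸ hr))
    set a : ℝ → ℝ := fun r => (x - r)⁻¹ with ha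
    set P : ℝ := ∏ r ∈ s, (x - r) with hP
    have hPne : P ≠ 0 := Finset.prod_ne_zero_iff.mpr hxr
    set S : ℝ := ∑ r ∈ s, a r with hS
    set S2 : ℝ := ∑ r ∈ s, (a r)^2 with hS2
    have key1 : ∀ r ∈ s, ∏ t ∈ s.erase r, (x - t) = P * a r := by
      intro r hr
      have h2 : (x - r) * ∏ t ∈ s.erase r, (x - t) = P :=
        Finset.mul_prod_erase s (fun t => x - t) hr
      rw [← h2, ha]
      simp only
      rw [mul_comm (x - r), mul_assoc, mul_inv_cancel₀ (hxr r hr), mul_one]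
    have key2 : ∀ r ∈ s, ∀ t ∈ s.erase r,
        ∏ u ∈ (s.erase r).erase t, (x - u) = P * a r * a t := by
      intro r hr t ht
      have h1 : (x - t) * ∏ u ∈ (s.erase r).erase t, (x - u) = ∏ u ∈ s.erase r, (x - u) :=
        Finset.mul_prod_erase (s.erase r) (fun u => x - u) ht
      have h2 : (x - r) * ∏ u ∈ s.erase r, (x - u) = P :=
        Finset.mul_prod_erase s (fun t => x - t) hr
      have htx : x - t ≠ 0 := hxr t (Finset.mem_of_mem_erase ht)
      have hrx : x - r ≠ 0 := hxr r hr
      rw [← h2, ← h1, ha]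
      simp only
      field_simp
    have e0 : eval x q = c * P := by
      rw [hq]; simp [eval_prod, hP]
    have e1 : eval x (derivative q) = c * (P * S) := by
      rw [hq1]
      simp only [eval_mul, eval_C, eval_finset_sum, eval_prod, eval_sub, eval_X]
      rw [Finset.sum_congr rfl key1, ← Finset.mul_sum, hS]
    have e2 : eval x (derivative (derivative q)) = c * (P * (S^2 - S2)) := by
      rw [hq2]
      simp only [eval_mul, eval_C, eval_finset_sum, eval_prod, eval_sub, eval_X]
      congr 1
      have : ∀ r ∈ s, ∑ t ∈ s.erase r, ∏ u ∈ (s.erase r).erase t, (x - u)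
          = P * a r * (S - a r) := by
        intro r hr
        rw [Finset.sum_congr rfl (key2 r hr), ← Finset.mul_sum,
          Finset.sum_erase_eq_sub hr, ← hS]
      rw [Finset.sum_congr rfl this]
      have expand : ∀ r ∈ s, P * a r * (S - a r) = P * (a r * S) - P * (a r)^2 := by
        intros; ring
      rw [Finset.sum_congr rfl expand, Finset.sum_sub_distrib, ← Finset.mul_sum,
        ← Finset.mul_sum, ← Finset.sum_mul, ← hS, ← hS2]
      ring
    -- strict Cauchy-Schwarz
    have hsq : ∑ r ∈ s, ∑ t ∈ s, (a r - a t)^2 = 2 * (s.card * S2) - 2 * S^2 := by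
      have inner : ∀ r ∈ s, ∑ t ∈ s, (a r - a t)^2
          = s.card * (a r)^2 + S2 - 2 * (a r * S) := by
        intro r _
        have : ∀ t ∈ s, (a r - a t)^2 = (a r)^2 + (a t)^2 - 2 * (a r * a t) := by
          intros; ring
        rw [Finset.sum_congr rfl this, Finset.sum_sub_distrib, Finset.sum_add_distrib,
          Finset.sum_const, ← Finset.mul_sum, ← Finset.mul_sum, ← hS2, ← hS]
        ring
      rw [Finset.sum_congr rfl inner, Finset.sum_sub_distrib, Finset.sum_add_distrib,
        Finset.sum_const, nsmul_eq_mul, ← Finset.mul_sum, ← hS2]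
      have h3 : ∑ r ∈ s, 2 * (a r * S) = 2 * S * ∑ r ∈ s, a r := by
        rw [Finset.mul_sum]
        exact Finset.sum_congr rfl fun r _ => by ring
      rw [h3, ← hS]
      ring
    obtain ⟨r0, hr0, t0, ht0, hne⟩ := Finset.one_lt_card.mp (lt_of_lt_of_le one_lt_two hs)
    have hane : a r0 ≠ a t0 := by
      intro h
      apply hne
      have h2 : x - r0 = x - t0 := inv_injective h
      linarith
    have hpos : 0 < ∑ r ∈ s, ∑ t ∈ s, (a r - a t)^2 := by
      refine Finset.sum_pos' (fun r _ => Finset.sum_nonneg fun t _ => sq_nonneg _) ⟨r0, hr0, ?_⟩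
      refine Finset.sum_pos' (fun t _ => sq_nonneg _) ⟨t0, ht0, ?_⟩
      have := sub_ne_zero.mpr hane
      positivity
    have hCS : 0 < (s.card : ℝ) * S2 - S^2 := by nlinarith [hsq, hpos]
    rw [e0, e1, e2]
    have goal_eq : ((s.card : ℝ) - 1) * (c * (P * S))^2
        - (s.card : ℝ) * (c * P) * (c * (P * (S^2 - S2)))
        = c^2 * P^2 * ((s.card : ℝ) * S2 - S^2) := by ring
    rw [goal_eq]
    positivity

lemma roots_card_of_real (p : ℝ[X]) (hp : p ≠ 0)
    (hreal : ∀ z : ℂ, aeval z p = 0 → z.im = 0) :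
    Multiset.card p.roots = p.natDegree := by
  classical
  have hinj : Function.Injective (algebraMap ℝ ℂ) := (algebraMap ℝ ℂ).injective
  have hsplit : Splits (p.map (algebraMap ℝ ℂ)) := IsAlgClosed.splits _
  have hcard := hsplit.natDegree_eq_card_roots
  rw [natDegree_map] at hcard
  have hmapne : p.map (algebraMap ℝ ℂ) ≠ 0 := (Polynomial.map_ne_zero_iff hinj).mpr hp
  have hge : (p.map (algebraMap ℝ ℂ)).roots ≤ p.roots.map (algebraMap ℝ ℂ) := by
    rw [Multiset.le_iff_count]
    intro z
    by_cases hz : z ∈ (p.map (algebraMap ℝ ℂ)).roots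
    · have hz0 : aeval z p = 0 := by
        have := (mem_roots hmapne).mp hz
        rw [aeval_def, eval₂_eq_eval_map]; exact this
      have him := hreal z hz0
      have hzre : (algebraMap ℝ ℂ) z.re = z := Complex.ext rfl (by simp [him])
      rw [← hzre, Multiset.count_map_eq_count' _ _ hinj, count_roots, count_roots,
        eq_rootMultiplicity_map hinj]
    · rw [Multiset.count_eq_zero_of_notMem hz]
      exact Nat.zero_le _
  have heq : (p.map (algebraMap ℝ ℂ)).roots = p.roots.map (algebraMap ℝ ℂ) :=
    le_antisymm hge (map_roots_le_of_injective p hinj)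
  rw [hcard, heq, Multiset.card_map]

lemma roots_nodup_of_simple (p : ℝ[X]) (hp : p ≠ 0) (hp' : derivative p ≠ 0)
    (hsimple : ∀ z : ℂ, aeval z p = 0 → aeval z (derivative p) ≠ 0) :
    p.roots.Nodup := by
  rw [Multiset.nodup_iff_count_le_one]
  intro r
  by_contra h
  push_neg at h
  have h2 : 2 ≤ rootMultiplicity r p := by rw [← count_roots]; omega
  have hroot : p.IsRoot r := by
    rw [← rootMultiplicity_pos hp]; omega
  have hder : (derivative p).IsRoot r := by
    rw [← rootMultiplicity_pos hp', derivative_rootMultiplicity_of_root hroot]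
    omega
  have hz0 : aeval (algebraMap ℝ ℂ r) p = 0 := by
    rw [aeval_algebraMap_apply]
    simp [hroot.eq_zero]
  have := hsimple _ hz0
  apply this
  rw [aeval_algebraMap_apply]
  simp [hder.eq_zero]

def RSNice (q : ℝ[X]) : Prop := Multiset.card q.roots = q.natDegree ∧ q.roots.Nodup

lemma nice_derivative (q : ℝ[X]) (h : RSNice q) (hdeg : 1 ≤ q.natDegree) :
    RSNice (derivative q) ∧ (derivative q).natDegree = q.natDegree - 1 := by
  obtain ⟨hcard, hnodup⟩ := h
  have hdd : (derivative q).degree = ((q.natDegree - 1 : ℕ) : WithBot ℕ) :=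
    degree_derivative_eq q hdeg
  have hq' : derivative q ≠ 0 := fun h0 => by
    rw [h0, degree_zero] at hdd; exact (WithBot.bot_ne_coe) hdd
  have hnd : (derivative q).natDegree = q.natDegree - 1 := natDegree_eq_of_degree_eq_some hdd
  have hA : q.roots.toFinset.card = q.natDegree := by
    rw [Multiset.toFinset_card_of_nodup hnodup, hcard]
  have hB := card_roots_toFinset_le_derivative q
  have hC : (derivative q).roots.toFinset.card ≤ Multiset.card (derivative q).roots :=
    Multiset.toFinset_card_le _
  have hD : Multiset.card (derivative q).roots ≤ q.natDegree - 1 := by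
    rw [← hnd]; exact card_roots' _
  have hcard' : Multiset.card (derivative q).roots = q.natDegree - 1 := by omega
  have hnodup' : (derivative q).roots.Nodup :=
    Multiset.toFinset_card_eq_card_iff_nodup.mp (by omega)
  exact ⟨⟨by omega, hnodup'⟩, hnd⟩

lemma nice_iterate (p : ℝ[X]) (k : ℕ) (hdeg : p.natDegree = k) (h : RSNice p) :
    ∀ j ≤ k, RSNice (derivative^[j] p) ∧ (derivative^[j] p).natDegree = k - j := by
  intro j hj
  induction j with
  | zero => simpa using ⟨h, hdeg⟩
  | succ n ih =>
    obtain ⟨hn, hnd⟩ := ih (by omega)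
    rw [Function.iterate_succ_apply']
    have := nice_derivative _ hn (by omega)
    rw [hnd] at this
    exact ⟨this.1, by rw [this.2]; omega⟩
/-- One direction of Polya's (Jensen's second) criterion: if a real polynomial `p` of
degree `k ≥ 2` has all roots real and simple, then for every `i = 1,…,k-1` the
polynomial `Gᵢ(x) = (k-i)(p^{(i)}(x))² - (k-i+1)p^{(i-1)}(x)p^{(i+1)}(x)` is strictly
positive on `ℝ`. -/
theorem polya_criterion_forward (p : ℝ[X]) (k : ℕ) (hk : 2 ≤ k) (hdeg : p.natDegree = k)
    (hreal : ∀ z : ℂ, Polynomial.aeval z p = 0 → z.im = 0)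
    (hsimple : ∀ z : ℂ, Polynomial.aeval z p = 0 → Polynomial.aeval z (derivative p) ≠ 0) :
    ∀ i : ℕ, 1 ≤ i → i ≤ k - 1 → ∀ x : ℝ,
      0 < ((k : ℝ) - i) * (Polynomial.eval x (derivative^[i] p))^2
        - ((k : ℝ) - i + 1) * Polynomial.eval x (derivative^[i-1] p)
            * Polynomial.eval x (derivative^[i+1] p) := by
  have hp0 : p ≠ 0 := fun h => by simp [h] at hdeg; omega
  have hpdeg : 1 ≤ p.natDegree := by omega
  have hp'0 : derivative p ≠ 0 := fun h0 => by
    have hdd := degree_derivative_eq p hpdeg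
    rw [h0, degree_zero] at hdd
    exact WithBot.bot_ne_coe hdd
  have hnice : RSNice p :=
    ⟨roots_card_of_real p hp0 hreal, roots_nodup_of_simple p hp0 hp'0 hsimple⟩
  intro i hi1 hi2 x
  obtain ⟨⟨hqcard, hqnodup⟩, hqdeg⟩ :=
    nice_iterate p k hdeg hnice (i - 1) (by omega)
  set q : ℝ[X] := derivative^[i-1] p with hq
  have hq0 : q ≠ 0 := fun h => by
    rw [h, natDegree_zero] at hqdeg; omega
  have hc : q.leadingCoeff ≠ 0 := leadingCoeff_ne_zero.mpr hq0
  set s : Finset ℝ := ⟨q.roots, hqnodup⟩ with hs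
  have hscard : s.card = k - (i - 1) := by
    rw [hs]; simpa [Finset.card] using hqcard.trans hqdeg
  have hs2 : 2 ≤ s.card := by omega
  have hfact : q = C q.leadingCoeff * ∏ r ∈ s, (X - C r) := by
    rw [hs, Finset.prod_mk]
    exact (C_leadingCoeff_mul_prod_multiset_X_sub_C hqcard).symm
  have key := key_prod s q.leadingCoeff hc hs2 q hfact x
  have e1 : derivative^[i] p = derivative q := by
    rw [hq, ← Function.iterate_succ_apply' derivative (i-1) p]
    congr 1; omega
  have e2 : derivative^[i+1] p = derivative (derivative q) := by
    rw [hq, ← Function.iterate_succ_apply' derivative (i-1) p,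
      ← Function.iterate_succ_apply' derivative (i-1+1) p]
    congr 1; omega
  have hik : i ≤ k := by omega
  have c1 : (s.card : ℝ) - 1 = (k : ℝ) - i := by
    rw [hscard]; push_cast [Nat.cast_sub (by omega : i - 1 ≤ k), Nat.cast_sub (by omega : 1 ≤ i)]
    ring
  have c2 : (s.card : ℝ) = (k : ℝ) - i + 1 := by
    rw [hscard]; push_cast [Nat.cast_sub (by omega : i - 1 ≤ k), Nat.cast_sub (by omega : 1 ≤ i)]
    ring
  rw [c1, c2] at key
  rw [e1, e2]
  exact key
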